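/- Let a, b, λ, K > 0 with a > b/λ. Let U : [0, ∞) → ℝ be continuously differentiable with U(0) ≤ 0 and suppose that for all t ≥ 0: U'(t) + a U(t) ≤ b ∫_0^t e^{−λ(t−s)} max(U(s), 0) ds + K e^{−λ t}. Then U(t) ≤ K / (a − b/λ) for all t ≥ 0. -/

import Mathlib

open Real Set Filter Topology

set_option maxHeartbeats 1000000 in
/-- Gronwall-type inequality with decaying memory, from the
large-frequency estimate of the heat-kernel appendix.
If `a > b/λ`, `U(0) ≤ 0` and
`U'(t) + a U(t) ≤ b ∫₀ᵗ e^{-λ(t-s)} max(U(s),0) ds + K e^{-λt}` for `t ≥ 0`,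
then `U(t) ≤ K/(a - b/λ)` for all `t ≥ 0`. -/
theorem statement_18
    (a b lam K : ℝ) (ha : 0 < a) (hb : 0 < b) (hlam : 0 < lam) (hK : 0 < K)
    (hab : b / lam < a)
    (U U' : ℝ → ℝ)
    (hder : ∀ t ≥ (0:ℝ), HasDerivAt U (U' t) t)
    (hcont : ContinuousOn U' (Ici 0))
    (h0 : U 0 ≤ 0)
    (hineq : ∀ t ≥ (0:ℝ),
      U' t + a * U t ≤
        b * (∫ s in (0:ℝ)..t, Real.exp (-lam * (t - s)) * max (U s) 0)
          + K * Real.exp (-lam * t)) :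
    ∀ t ≥ (0:ℝ), U t ≤ K / (a - b / lam) := by
  have hd : (0:ℝ) < a - b / lam := by linarith
  have hUc : ∀ s ∈ Ici (0:ℝ), ContinuousAt U s := fun s hs => (hder s hs).continuousAt
  have hUcont : ContinuousOn U (Ici 0) := fun s hs => (hUc s hs).continuousWithinAt
  by_contra hcon
  push_neg at hcon
  obtain ⟨t1, ht1, hgt⟩ := hcon
  set M : ℝ := U t1 with hM
  have hMpos : 0 < M := lt_trans (by positivity) hgt
  have hKM : K < M * (a - b / lam) := (div_lt_iff₀ hd).mp hgt
  set S : Set ℝ := {s | s ∈ Icc (0:ℝ) t1 ∧ M ≤ U s} with hS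
  have hne : S.Nonempty := ⟨t1, ⟨⟨ht1, le_refl _⟩, le_refl _⟩⟩
  have hScl : IsClosed S := by
    have : S = Icc (0:ℝ) t1 ∩ U ⁻¹' (Ici M) := by
      ext s
      simp only [hS, Set.mem_setOf_eq, Set.mem_inter_iff, Set.mem_preimage, Set.mem_Ici]
    rw [this]
    exact (hUcont.mono (fun s hs => hs.1)).preimage_isClosed_of_isClosed
      isClosed_Icc isClosed_Ici
  have hScompact : IsCompact S :=
    IsCompact.of_isClosed_subset isCompact_Icc hScl (fun s hs => hs.1)
  set T : ℝ := sInf S with hT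
  have hTS : T ∈ S := hScompact.sInf_mem hne
  have hT0 : 0 ≤ T := hTS.1.1
  have hUT : M ≤ U T := hTS.2
  have hTpos : 0 < T := by
    rcases lt_or_eq_of_le hT0 with h | h
    · exact h
    · exfalso; rw [← h] at hUT; linarith
  have hbdd : BddBelow S := ⟨0, fun s hs => hs.1.1⟩
  have hlt : ∀ s, 0 ≤ s → s < T → U s < M := by
    intro s hs hsT
    by_contra hge
    push_neg at hge
    have : s ∈ S := ⟨⟨hs, le_trans hsT.le hTS.1.2⟩, hge⟩
    exact absurd (csInf_le hbdd this) (not_le.mpr hsT)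
  -- U T = M
  have hUTeq : U T = M := by
    refine le_antisymm ?_ hUT
    have htend : Tendsto U (𝓝[<] T) (𝓝 (U T)) :=
      ((hUc T hT0).tendsto).mono_left nhdsWithin_le_nhds
    have hev : ∀ᶠ s in 𝓝[<] T, U s ≤ M := by
      filter_upwards [Ioo_mem_nhdsLT_of_mem (⟨hTpos, le_refl T⟩ : T ∈ Ioc 0 T)]
        with s hs
      exact (hlt s hs.1.le hs.2).le
    exact le_of_tendsto htend hev
  -- derivative at T is nonnegative
  have hU'0 : 0 ≤ U' T := by
    have hslope : Tendsto (slope U T) (𝓝[≠] T) (𝓝 (U' T)) :=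
      hasDerivAt_iff_tendsto_slope.1 (hder T hT0)
    have hslope' : Tendsto (slope U T) (𝓝[<] T) (𝓝 (U' T)) :=
      hslope.mono_left (nhdsWithin_mono _ fun s hs => ne_of_lt hs)
    refine ge_of_tendsto hslope' ?_
    filter_upwards [Ioo_mem_nhdsLT_of_mem (⟨hTpos, le_refl T⟩ : T ∈ Ioc 0 T)]
      with s hs
    have h1 : U s - U T < 0 := by
      have := hlt s hs.1.le hs.2
      rw [hUTeq]; linarith
    have h2 : s - T < 0 := by linarith [hs.2]
    have : 0 < (U s - U T) / (s - T) := div_pos_of_neg_of_neg h1 h2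
    simpa [slope_def_field] using this.le
  -- integral bound
  have hmax : ∀ s ∈ Icc (0:ℝ) T, Real.exp (-lam * (T - s)) * max (U s) 0
      ≤ Real.exp (-lam * (T - s)) * M := by
    intro s hs
    have hUsM : U s ≤ M := by
      rcases lt_or_eq_of_le hs.2 with h | h
      · exact (hlt s hs.1 h).le
      · rw [h, hUTeq]
    have : max (U s) 0 ≤ M := max_le hUsM hMpos.le
    exact mul_le_mul_of_nonneg_left this (Real.exp_nonneg _)
  have hcont1 : ContinuousOn (fun s => Real.exp (-lam * (T - s)) * max (U s) 0)
      (uIcc (0:ℝ) T) := by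
    rw [uIcc_of_le hT0]
    have h1 : ContinuousOn (fun s => max (U s) 0) (Icc (0:ℝ) T) := by
      simpa [max_def] using
        ((hUcont.mono (fun s (hs : s ∈ Icc (0:ℝ) T) => hs.1)).sup continuousOn_const)
    exact (Continuous.continuousOn (by fun_prop)).mul h1
  have hcont2 : ContinuousOn (fun s => Real.exp (-lam * (T - s)) * M)
      (uIcc (0:ℝ) T) := Continuous.continuousOn (by fun_prop)
  have hIb : (∫ s in (0:ℝ)..T, Real.exp (-lam * (T - s)) * max (U s) 0)
      ≤ ∫ s in (0:ℝ)..T, Real.exp (-lam * (T - s)) * M := by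
    apply intervalIntegral.integral_mono_on hT0
      (hcont1.intervalIntegrable) (hcont2.intervalIntegrable) hmax
  -- compute the right integral
  have hexp : (∫ s in (0:ℝ)..T, Real.exp (lam * s)) = (Real.exp (lam * T) - 1) / lam := by
    have hde : ∀ s ∈ uIcc (0:ℝ) T, HasDerivAt (fun x => Real.exp (lam * x) / lam)
        (Real.exp (lam * s)) s := by
      intro s _
      have h1 : HasDerivAt (fun x : ℝ => lam * x) lam s := by
        simpa using (hasDerivAt_id s).const_mul lam
      have h2 := (Real.hasDerivAt_exp (lam * s)).comp s h1
      have h3 := h2.div_const lam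
      exact h3.congr_deriv (by field_simp)
    rw [intervalIntegral.integral_eq_sub_of_hasDerivAt hde
      (Continuous.continuousOn (by fun_prop)).intervalIntegrable]
    simp
    ring
  have hIval : (∫ s in (0:ℝ)..T, Real.exp (-lam * (T - s)) * M)
      = M * Real.exp (-lam * T) * ((Real.exp (lam * T) - 1) / lam) := by
    have : ∀ s : ℝ, Real.exp (-lam * (T - s)) * M
        = (M * Real.exp (-lam * T)) * Real.exp (lam * s) := by
      intro s
      rw [show (-lam * (T - s)) = (-lam * T) + lam * s by ring, Real.exp_add]
      ring
    simp_rw [this]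
    rw [intervalIntegral.integral_const_mul, hexp]
  -- final contradiction
  have hkey := hineq T hT0
  set E : ℝ := Real.exp (-lam * T) with hE
  have hE0 : 0 < E := Real.exp_pos _
  have hE1 : E ≤ 1 := Real.exp_le_one_iff.mpr (by nlinarith)
  have hEinv : Real.exp (lam * T) * E = 1 := by
    rw [hE, ← Real.exp_add]
    simp [show lam * T + -lam * T = 0 by ring]
  have hIle : (∫ s in (0:ℝ)..T, Real.exp (-lam * (T - s)) * max (U s) 0)
      ≤ M * (1 - E) / lam := by
    rw [hIval] at hIb
    refine hIb.trans (le_of_eq ?_)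
    field_simp
    nlinarith [hEinv]
  have hbM : b * (M * (1 - E) / lam) ≤ b / lam * M := by
    rw [div_mul_eq_mul_div, ← mul_div_assoc]
    gcongr
    nlinarith
  have hKE : K * E ≤ K := by nlinarith
  have hfinal : U' T + a * M ≤ b / lam * M + K := by
    calc U' T + a * M = U' T + a * U T := by rw [hUTeq]
      _ ≤ b * (∫ s in (0:ℝ)..T, Real.exp (-lam * (T - s)) * max (U s) 0) + K * E := hkey
      _ ≤ b * (M * (1 - E) / lam) + K := by
          refine add_le_add (mul_le_mul_of_nonneg_left hIle hb.le) hKE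
      _ ≤ b / lam * M + K := by linarith [hbM]
  nlinarith [hfinal, hU'0, hKM]
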